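/- Fix integers r,s,t with 0 ≤ r < t and 0 ≤ s < t, set μ(i,j,k) = r·i + s·j + t·k, and let A, B be real numbers with A + B = 1 (in the uniform model A = α^(r²−t²) and B = α^(s²−t²)). Fix (i₀,j₀,k₀) ∈ ℤ³ with p := μ(i₀,j₀,k₀) satisfying 0 ≤ p < 2t. Suppose ρ : ℤ³ → ℝ satisfies: (a) ρ(i,j,k) = 0 whenever μ(i,j,k) < 0; (b) for every (i,j,k) with 0 ≤ μ(i,j,k) < 2t, ρ(i,j,k) = 1 if (i,j,k) = (i₀,j₀,k₀) and ρ(i,j,k) = 0 otherwise; (c) for every (i,j,k) with μ(i,j,k) ≥ 2t, ρ(i,j,k) + ρ(i,j,k−2) = A·(ρ(i+1,j,k−1) + ρ(i−1,j,k−1)) + B·(ρ(i,j+1,k−1) + ρ(i,j−1,k−1)). Then for every (i,j,k) ∈ ℤ³ the quantity E(i,j,k) := ρ(i,j,k) + ρ(i,j,k−2) − A·(ρ(i+1,j,k−1) + ρ(i−1,j,k−1)) − B·(ρ(i,j+1,k−1) + ρ(i,j−1,k−1)) equals: 1 if (i,j,k) = (i₀,j₀,k₀); −A if (i,j,k) =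 (i₀−1,j₀,k₀+1) and p < t+r, or if (i,j,k) = (i₀+1,j₀,k₀+1) and p < t−r; −B if (i,j,k) = (i₀,j₀−1,k₀+1) and p < t+s, or if (i,j,k) = (i₀,j₀+1,k₀+1) and p < t−s; and 0 otherwise. (This is the coefficient-wise form of the generating-function identity ρ_p(x,y,z)·D(x,y,z) = numerator of Theorem 3.2, covering all five cases of p at once.) -/
import Mathlib


/-- coefficient-wise form of Theorem 3.2: the local dimer density ρ of
the uniform (r,s,t)-slanted T-system, with source `(i₀,j₀,k₀)` on plane `p = μ(i₀,j₀,k₀)`,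
satisfies `ρ_p·D = numerator`, i.e. the defect
`E(i,j,k) = ρ(i,j,k) + ρ(i,j,k−2) − A(ρ(i±1,j,k−1)) − B(ρ(i,j±1,k−1))`
takes the stated values. -/
theorem uniform_density_generating_identity
    (r s t : ℤ) (hr0 : 0 ≤ r) (hrt : r < t) (hs0 : 0 ≤ s) (hst : s < t)
    (A B : ℝ) (hAB : A + B = 1)
    (i₀ j₀ k₀ : ℤ) (hp0 : 0 ≤ r * i₀ + s * j₀ + t * k₀)
    (hp2t : r * i₀ + s * j₀ + t * k₀ < 2 * t)
    (ρ : ℤ → ℤ → ℤ → ℝ)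
    (hneg : ∀ i j k : ℤ, r * i + s * j + t * k < 0 → ρ i j k = 0)
    (hband : ∀ i j k : ℤ, 0 ≤ r * i + s * j + t * k → r * i + s * j + t * k < 2 * t →
      ρ i j k = if (i, j, k) = (i₀, j₀, k₀) then 1 else 0)
    (hrec : ∀ i j k : ℤ, 2 * t ≤ r * i + s * j + t * k →
      ρ i j k + ρ i j (k - 2)
        = A * (ρ (i + 1) j (k - 1) + ρ (i - 1) j (k - 1))
          + B * (ρ i (j + 1) (k - 1) + ρ i (j - 1) (k - 1))) :
    ∀ i j k : ℤ,
      ρ i j k + ρ i j (k - 2)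
          - A * (ρ (i + 1) j (k - 1) + ρ (i - 1) j (k - 1))
          - B * (ρ i (j + 1) (k - 1) + ρ i (j - 1) (k - 1))
        = if (i, j, k) = (i₀, j₀, k₀) then 1
          else if ((i, j, k) = (i₀ - 1, j₀, k₀ + 1) ∧ r * i₀ + s * j₀ + t * k₀ < t + r)
              ∨ ((i, j, k) = (i₀ + 1, j₀, k₀ + 1) ∧ r * i₀ + s * j₀ + t * k₀ < t - r)
            then -A
          else if ((i, j, k) = (i₀, j₀ - 1, k₀ + 1) ∧ r * i₀ + s * j₀ + t * k₀ < t + s)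
              ∨ ((i, j, k) = (i₀, j₀ + 1, k₀ + 1) ∧ r * i₀ + s * j₀ + t * k₀ < t - s)
            then -B
          else 0 := by
  have key : ∀ a b c : ℤ, r * a + s * b + t * c < 2 * t →
      ρ a b c = if (a, b, c) = (i₀, j₀, k₀) then (1 : ℝ) else 0 := by
    intro a b c h
    by_cases h0 : 0 ≤ r * a + s * b + t * c
    · exact hband a b c h0 h
    · rw [hneg a b c (lt_of_not_ge h0), if_neg]
      intro heq
      simp only [Prod.mk.injEq] at heq
      obtain ⟨h1, h2, h3⟩ := heq
      subst h1; subst h2; subst h3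
      exact h0 hp0
  intro i j k
  by_cases hlt0 : r * i + s * j + t * k < 0
  · -- everything vanishes
    have z0 : ρ i j k = 0 := hneg _ _ _ hlt0
    have z1 : ρ i j (k - 2) = 0 := hneg _ _ _ (by linarith)
    have z2 : ρ (i + 1) j (k - 1) = 0 := hneg _ _ _ (by linarith)
    have z3 : ρ (i - 1) j (k - 1) = 0 := hneg _ _ _ (by linarith)
    have z4 : ρ i (j + 1) (k - 1) = 0 := hneg _ _ _ (by linarith)
    have z5 : ρ i (j - 1) (k - 1) = 0 := hneg _ _ _ (by linarith)
    have n0 : ¬ ((i, j, k) = (i₀, j₀, k₀)) := by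
      intro h
      simp only [Prod.mk.injEq] at h
      obtain ⟨h1, h2, h3⟩ := h
      subst h1; subst h2; subst h3
      linarith
    have nA : ¬ (((i, j, k) = (i₀ - 1, j₀, k₀ + 1) ∧ r * i₀ + s * j₀ + t * k₀ < t + r)
        ∨ ((i, j, k) = (i₀ + 1, j₀, k₀ + 1) ∧ r * i₀ + s * j₀ + t * k₀ < t - r)) := by
      rintro (⟨h, hc⟩ | ⟨h, hc⟩) <;>
        simp only [Prod.mk.injEq] at h <;>
        obtain ⟨h1, h2, h3⟩ := h <;>
        subst h1 <;> subst h2 <;> subst h3 <;> linarith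
    have nB : ¬ (((i, j, k) = (i₀, j₀ - 1, k₀ + 1) ∧ r * i₀ + s * j₀ + t * k₀ < t + s)
        ∨ ((i, j, k) = (i₀, j₀ + 1, k₀ + 1) ∧ r * i₀ + s * j₀ + t * k₀ < t - s)) := by
      rintro (⟨h, hc⟩ | ⟨h, hc⟩) <;>
        simp only [Prod.mk.injEq] at h <;>
        obtain ⟨h1, h2, h3⟩ := h <;>
        subst h1 <;> subst h2 <;> subst h3 <;> linarith
    rw [z0, z1, z2, z3, z4, z5, if_neg n0, if_neg nA, if_neg nB]
    ring
  · by_cases hge2 : 2 * t ≤ r * i + s * j + t * k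
    · -- recursion region: defect is zero
      have h := hrec i j k hge2
      have n0 : ¬ ((i, j, k) = (i₀, j₀, k₀)) := by
        intro h'
        simp only [Prod.mk.injEq] at h'
        obtain ⟨h1, h2, h3⟩ := h'
        subst h1; subst h2; subst h3
        linarith
      have nA : ¬ (((i, j, k) = (i₀ - 1, j₀, k₀ + 1) ∧ r * i₀ + s * j₀ + t * k₀ < t + r)
          ∨ ((i, j, k) = (i₀ + 1, j₀, k₀ + 1) ∧ r * i₀ + s * j₀ + t * k₀ < t - r)) := by
        rintro (⟨h', hc⟩ | ⟨h', hc⟩) <;>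
          simp only [Prod.mk.injEq] at h' <;>
          obtain ⟨h1, h2, h3⟩ := h' <;>
          subst h1 <;> subst h2 <;> subst h3 <;> linarith
      have nB : ¬ (((i, j, k) = (i₀, j₀ - 1, k₀ + 1) ∧ r * i₀ + s * j₀ + t * k₀ < t + s)
          ∨ ((i, j, k) = (i₀, j₀ + 1, k₀ + 1) ∧ r * i₀ + s * j₀ + t * k₀ < t - s)) := by
        rintro (⟨h', hc⟩ | ⟨h', hc⟩) <;>
          simp only [Prod.mk.injEq] at h' <;>
          obtain ⟨h1, h2, h3⟩ := h' <;>
          subst h1 <;> subst h2 <;> subst h3 <;> linarith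
      rw [if_neg n0, if_neg nA, if_neg nB]
      linarith
    · -- band region
      have hb0 : 0 ≤ r * i + s * j + t * k := le_of_not_gt hlt0
      have hb2 : r * i + s * j + t * k < 2 * t := lt_of_not_ge hge2
      have ht0 : 0 < t := lt_of_le_of_lt hr0 hrt
      have e1 : ρ i j k = if (i, j, k) = (i₀, j₀, k₀) then (1 : ℝ) else 0 :=
        key i j k hb2
      have e2 : ρ i j (k - 2) = 0 := hneg _ _ _ (by linarith)
      have e3 : ρ (i + 1) j (k - 1)
          = if (i + 1, j, k - 1) = (i₀, j₀, k₀) then (1 : ℝ) else 0 :=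
        key _ _ _ (by linarith)
      have e4 : ρ (i - 1) j (k - 1)
          = if (i - 1, j, k - 1) = (i₀, j₀, k₀) then (1 : ℝ) else 0 :=
        key _ _ _ (by linarith)
      have e5 : ρ i (j + 1) (k - 1)
          = if (i, j + 1, k - 1) = (i₀, j₀, k₀) then (1 : ℝ) else 0 :=
        key _ _ _ (by linarith)
      have e6 : ρ i (j - 1) (k - 1)
          = if (i, j - 1, k - 1) = (i₀, j₀, k₀) then (1 : ℝ) else 0 :=
        key _ _ _ (by linarith)
      rw [e1, e2, e3, e4, e5, e6]
      simp only [Prod.mk.injEq]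
      by_cases c0 : i = i₀ ∧ j = j₀ ∧ k = k₀
      · obtain ⟨h1, h2, h3⟩ := c0
        rw [if_pos (show i = i₀ ∧ j = j₀ ∧ k = k₀ from ⟨h1, h2, h3⟩),
          if_neg (by omega : ¬(i + 1 = i₀ ∧ j = j₀ ∧ k - 1 = k₀)),
          if_neg (by omega : ¬(i - 1 = i₀ ∧ j = j₀ ∧ k - 1 = k₀)),
          if_neg (by omega : ¬(i = i₀ ∧ j + 1 = j₀ ∧ k - 1 = k₀)),
          if_neg (by omega : ¬(i = i₀ ∧ j - 1 = j₀ ∧ k - 1 = k₀)),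
          if_pos (show i = i₀ ∧ j = j₀ ∧ k = k₀ from ⟨h1, h2, h3⟩)]
        ring
      · by_cases c1 : i = i₀ - 1 ∧ j = j₀ ∧ k = k₀ + 1
        · obtain ⟨h1, h2, h3⟩ := c1
          have hb2' : r * i₀ + s * j₀ + t * k₀ < t + r := by
            rw [h1, h2, h3] at hb2; linarith
          rw [if_neg (by omega : ¬(i = i₀ ∧ j = j₀ ∧ k = k₀)),
            if_pos (by omega : i + 1 = i₀ ∧ j = j₀ ∧ k - 1 = k₀),
            if_neg (by omega : ¬(i - 1 = i₀ ∧ j = j₀ ∧ k - 1 = k₀)),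
            if_neg (by omega : ¬(i = i₀ ∧ j + 1 = j₀ ∧ k - 1 = k₀)),
            if_neg (by omega : ¬(i = i₀ ∧ j - 1 = j₀ ∧ k - 1 = k₀)),
            if_neg (by omega : ¬(i = i₀ ∧ j = j₀ ∧ k = k₀)),
            if_pos (Or.inl ⟨⟨h1, h2, h3⟩, hb2'⟩)]
          ring
        · by_cases c2 : i = i₀ + 1 ∧ j = j₀ ∧ k = k₀ + 1
          · obtain ⟨h1, h2, h3⟩ := c2
            have hb2' : r * i₀ + s * j₀ + t * k₀ < t - r := by
              rw [h1, h2, h3] at hb2; linarith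
            rw [if_neg (by omega : ¬(i = i₀ ∧ j = j₀ ∧ k = k₀)),
              if_neg (by omega : ¬(i + 1 = i₀ ∧ j = j₀ ∧ k - 1 = k₀)),
              if_pos (by omega : i - 1 = i₀ ∧ j = j₀ ∧ k - 1 = k₀),
              if_neg (by omega : ¬(i = i₀ ∧ j + 1 = j₀ ∧ k - 1 = k₀)),
              if_neg (by omega : ¬(i = i₀ ∧ j - 1 = j₀ ∧ k - 1 = k₀)),
              if_neg (by omega : ¬(i = i₀ ∧ j = j₀ ∧ k = k₀)),
              if_pos (Or.inr ⟨⟨h1, h2, h3⟩, hb2'⟩)]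
            ring
          · by_cases c3 : i = i₀ ∧ j = j₀ - 1 ∧ k = k₀ + 1
            · obtain ⟨h1, h2, h3⟩ := c3
              have hb2' : r * i₀ + s * j₀ + t * k₀ < t + s := by
                rw [h1, h2, h3] at hb2; linarith
              rw [if_neg (by omega : ¬(i = i₀ ∧ j = j₀ ∧ k = k₀)),
                if_neg (by omega : ¬(i + 1 = i₀ ∧ j = j₀ ∧ k - 1 = k₀)),
                if_neg (by omega : ¬(i - 1 = i₀ ∧ j = j₀ ∧ k - 1 = k₀)),
                if_pos (by omega : i = i₀ ∧ j + 1 = j₀ ∧ k - 1 = k₀),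
                if_neg (by omega : ¬(i = i₀ ∧ j - 1 = j₀ ∧ k - 1 = k₀)),
                if_neg (by omega : ¬(i = i₀ ∧ j = j₀ ∧ k = k₀)),
                if_neg (by rintro (⟨h', _⟩ | ⟨h', _⟩) <;> omega),
                if_pos (Or.inl ⟨⟨h1, h2, h3⟩, hb2'⟩)]
              ring
            · by_cases c4 : i = i₀ ∧ j = j₀ + 1 ∧ k = k₀ + 1
              · obtain ⟨h1, h2, h3⟩ := c4
                have hb2' : r * i₀ + s * j₀ + t * k₀ < t - s := by
                  rw [h1, h2, h3] at hb2; linarith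
                rw [if_neg (by omega : ¬(i = i₀ ∧ j = j₀ ∧ k = k₀)),
                  if_neg (by omega : ¬(i + 1 = i₀ ∧ j = j₀ ∧ k - 1 = k₀)),
                  if_neg (by omega : ¬(i - 1 = i₀ ∧ j = j₀ ∧ k - 1 = k₀)),
                  if_neg (by omega : ¬(i = i₀ ∧ j + 1 = j₀ ∧ k - 1 = k₀)),
                  if_pos (by omega : i = i₀ ∧ j - 1 = j₀ ∧ k - 1 = k₀),
                  if_neg (by omega : ¬(i = i₀ ∧ j = j₀ ∧ k = k₀)),
                  if_neg (by rintro (⟨h', _⟩ | ⟨h', _⟩) <;> omega),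
                  if_pos (Or.inr ⟨⟨h1, h2, h3⟩, hb2'⟩)]
                ring
              · rw [if_neg (by omega : ¬(i = i₀ ∧ j = j₀ ∧ k = k₀)),
                  if_neg (by omega : ¬(i + 1 = i₀ ∧ j = j₀ ∧ k - 1 = k₀)),
                  if_neg (by omega : ¬(i - 1 = i₀ ∧ j = j₀ ∧ k - 1 = k₀)),
                  if_neg (by omega : ¬(i = i₀ ∧ j + 1 = j₀ ∧ k - 1 = k₀)),
                  if_neg (by omega : ¬(i = i₀ ∧ j - 1 = j₀ ∧ k - 1 = k₀)),
                  if_neg (by omega : ¬(i = i₀ ∧ j = j₀ ∧ k = k₀)),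
                  if_neg (by rintro (⟨h', _⟩ | ⟨h', _⟩) <;> omega),
                  if_neg (by rintro (⟨h', _⟩ | ⟨h', _⟩) <;> omega)]
                ring
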